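/- arXiv:2007.02815 — 4 statements merged into one kernel-verified Lean document; each statement's English description precedes it below -/
import Mathlib

section
/- For every α > 0, every x > 0, and every positive integer n, one has |p_α(x) − (1/(πx)) ∑_{k=1}^{n} (−1)^{k+1} sin(kπ/2) Γ(1+k/α) x^{k}/k!| ≤ x^{n} Γ((n+1)/α)/(π α n!). -/
set_option maxHeartbeats 1000000

open MeasureTheory Real Set Finset

lemma integrableOn_pow_exp (α : ℝ) (hα : 0 < α) (k : ℕ) :
    IntegrableOn (fun y : ℝ => y ^ k * Real.exp (-(y ^ α))) (Ioi 0) := by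
  have hs : (0:ℝ) < ((k:ℝ)+1)/α := by positivity
  have h := (integrableOn_Ioi_comp_rpow_iff'
      (fun u : ℝ => Real.exp (-u) * u ^ (((k:ℝ)+1)/α - 1)) hα.ne').mpr
      (Real.GammaIntegral_convergent hs)
  refine h.congr_fun (fun y hy => ?_) measurableSet_Ioi
  have hy0 : (0:ℝ) < y := hy
  have h1 : (y ^ α) ^ (((k:ℝ)+1)/α - 1) = y ^ ((k:ℝ)+1-α) := by
    rw [← Real.rpow_mul hy0.le]
    congr 1
    field_simp
  simp only [smul_eq_mul, h1]
  rw [show (y:ℝ) ^ k = y ^ (k:ℝ) from (Real.rpow_natCast y k).symm,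
    mul_left_comm, ← Real.rpow_add hy0]
  ring_nf

lemma integral_pow_exp (α : ℝ) (hα : 0 < α) (k : ℕ) :
    ∫ y in Ioi (0:ℝ), y ^ k * Real.exp (-(y ^ α)) = Real.Gamma (((k:ℝ)+1)/α) / α := by
  have := integral_rpow_mul_exp_neg_rpow hα (neg_one_lt_zero.trans_le (Nat.cast_nonneg k))
  rw [one_div, ← div_eq_inv_mul] at this
  rw [← this]
  refine setIntegral_congr_fun measurableSet_Ioi (fun y hy => ?_)
  rw [Real.rpow_natCast]

set_option maxHeartbeats 1000000

lemma cos_taylor_bound (n : ℕ) : ∀ (m : ℕ) (t : ℝ), 0 ≤ t →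
    |Real.cos (t + m * (Real.pi/2)) -
      ∑ j ∈ Finset.range n, Real.cos (((j:ℝ) + m) * (Real.pi/2)) * t ^ j / (j.factorial : ℝ)|
      ≤ t ^ n / (n.factorial : ℝ) := by
  induction n with
  | zero =>
    intro m t ht
    simpa using Real.abs_cos_le_one _
  | succ n ih =>
    intro m t ht
    set F : ℝ → ℝ := fun s => Real.cos (s + m * (Real.pi/2)) -
      ∑ j ∈ Finset.range (n+1), Real.cos (((j:ℝ) + m) * (Real.pi/2)) * s ^ j / (j.factorial : ℝ)
      with hF
    set G : ℝ → ℝ := fun s => Real.cos (s + (m+1) * (Real.pi/2)) -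
      ∑ j ∈ Finset.range n, Real.cos (((j:ℝ) + (m+1)) * (Real.pi/2)) * s ^ j / (j.factorial : ℝ)
      with hG
    have hF0 : F 0 = 0 := by
      simp only [hF]
      rw [Finset.sum_eq_single 0]
      · simp
      · intro j _ hj
        simp [zero_pow hj]
      · simp
    have hderiv : ∀ s : ℝ, HasDerivAt F (G s) s := by
      intro s
      have h1 : HasDerivAt (fun u : ℝ => Real.cos (u + m * (Real.pi/2)))
          (Real.cos (s + (m+1) * (Real.pi/2))) s := by
        have := ((Real.hasDerivAt_cos (s + m * (Real.pi/2))).comp s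
          ((hasDerivAt_id s).add_const (m * (Real.pi/2))))
        simp only [mul_one] at this
        refine this.congr_deriv ?_
        rw [show ((m:ℝ)+1) * (Real.pi/2) = m * (Real.pi/2) + Real.pi/2 by ring, ← add_assoc,
          Real.cos_add_pi_div_two]
      have h2 : HasDerivAt (fun s : ℝ => ∑ j ∈ Finset.range (n+1),
          Real.cos (((j:ℝ) + m) * (Real.pi/2)) * s ^ j / (j.factorial : ℝ))
          (∑ j ∈ Finset.range n,
            Real.cos (((j:ℝ) + (m+1)) * (Real.pi/2)) * s ^ j / (j.factorial : ℝ)) s := by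
        have h3 : HasDerivAt (fun s : ℝ => ∑ j ∈ Finset.range (n+1),
            Real.cos (((j:ℝ) + m) * (Real.pi/2)) * s ^ j / (j.factorial : ℝ))
            (∑ j ∈ Finset.range (n+1),
              Real.cos (((j:ℝ) + m) * (Real.pi/2)) * ((j:ℝ) * s ^ (j-1)) / (j.factorial : ℝ)) s := by
          refine HasDerivAt.fun_sum (fun j _ => ?_)
          exact ((hasDerivAt_pow j s).const_mul _).div_const _
        convert h3 using 1
        rw [Finset.sum_range_succ']
        simp only [Nat.cast_zero, zero_mul, mul_zero, zero_div, add_zero]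
        refine Finset.sum_congr rfl (fun j _ => ?_)
        have : ((j+1).factorial : ℝ) = ((j:ℝ)+1) * (j.factorial : ℝ) := by
          rw [Nat.factorial_succ]; push_cast; ring
        rw [this, Nat.add_sub_cancel]
        have hj1 : ((j:ℝ)+1) ≠ 0 := by positivity
        push_cast
        field_simp
        ring_nf
      simpa using h1.fun_sub h2
    have hGcont : Continuous G := by
      refine (Real.continuous_cos.comp (by continuity)).sub ?_
      exact continuous_finset_sum _ (fun j _ => by continuity)
    have hFt : F t - F 0 = ∫ s in (0:ℝ)..t, G s :=
      (intervalIntegral.integral_eq_sub_of_hasDerivAt (fun s _ => hderiv s)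
        (hGcont.intervalIntegrable 0 t)).symm
    have key : |F t| ≤ t ^ (n+1) / ((n+1).factorial : ℝ) := by
      rw [show F t = ∫ s in (0:ℝ)..t, G s by rw [← hFt, hF0, sub_zero]]
      calc |∫ s in (0:ℝ)..t, G s| ≤ ∫ s in (0:ℝ)..t, |G s| :=
            intervalIntegral.abs_integral_le_integral_abs ht
        _ ≤ ∫ s in (0:ℝ)..t, s ^ n / (n.factorial : ℝ) := by
            refine intervalIntegral.integral_mono_on ht
              (hGcont.abs.intervalIntegrable 0 t)
              (((continuous_pow n).div_const ((n.factorial : ℝ))).intervalIntegrable 0 t) ?_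
            intro s hs
            have h4 := ih (m+1) s hs.1
            push_cast at h4
            exact h4
        _ = t ^ (n+1) / ((n+1).factorial : ℝ) := by
            rw [intervalIntegral.integral_div, integral_pow, zero_pow (Nat.succ_ne_zero n), sub_zero, Nat.factorial_succ]
            have h1 : ((n:ℝ)+1) ≠ 0 := by positivity
            have h2 : ((n.factorial : ℝ)) ≠ 0 := by positivity
            push_cast
            field_simp
    exact key

lemma coeff_eq (j : ℕ) :
    (-1 : ℝ) ^ ((1+j) + 1) * Real.sin (((1+j : ℕ) : ℝ) * Real.pi / 2) =
      Real.cos ((j:ℝ) * (Real.pi/2)) := by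
  have h1 : (((1+j : ℕ) : ℝ) * Real.pi / 2) = (j:ℝ) * (Real.pi/2) + Real.pi/2 := by
    push_cast; ring
  rw [h1, Real.sin_add_pi_div_two]
  have h2 : (-1 : ℝ) ^ ((1+j) + 1) = (-1:ℝ)^j := by
    rw [show (1+j)+1 = j + 2 by ring, pow_add]
    norm_num
  rw [h2]
  rcases Nat.even_or_odd j with he | ho
  · rw [he.neg_one_pow, one_mul]
  · obtain ⟨r, hr⟩ := ho
    have h3 : ((j:ℝ)) * (Real.pi/2) = (r:ℝ)*Real.pi + Real.pi/2 := by
      rw [hr]; push_cast; ring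
    rw [h3, Real.cos_add_pi_div_two, Real.sin_nat_mul_pi]
    ring

noncomputable def stableDensity (α : ℝ) (x : ℝ) : ℝ :=
  (1 / Real.pi) * ∫ y in Set.Ioi (0 : ℝ), Real.cos (x * y) * Real.exp (-(y ^ α))

theorem ascending_expansion_with_remainder (α : ℝ) (hα : 0 < α) (x : ℝ) (hx : 0 < x)
    (n : ℕ) (hn : 0 < n) :
    |stableDensity α x -
      (1 / (Real.pi * x)) * ∑ k ∈ Finset.Icc 1 n,
        (-1 : ℝ) ^ (k + 1) * Real.sin ((k : ℝ) * Real.pi / 2) *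
          Real.Gamma (1 + (k : ℝ) / α) * x ^ k / (Nat.factorial k : ℝ)| ≤
      x ^ n * Real.Gamma (((n : ℝ) + 1) / α) / (Real.pi * α * (Nat.factorial n : ℝ)) := by
  have hπ : (0:ℝ) < Real.pi := Real.pi_pos
  set c : ℕ → ℝ := fun j => Real.cos ((j:ℝ) * (Real.pi/2)) * x ^ j / (j.factorial : ℝ) with hc
  -- Step A : rewrite the finite sum
  have hsum : (1 / (Real.pi * x)) * ∑ k ∈ Finset.Icc 1 n,
        (-1 : ℝ) ^ (k + 1) * Real.sin ((k : ℝ) * Real.pi / 2) *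
          Real.Gamma (1 + (k : ℝ) / α) * x ^ k / (Nat.factorial k : ℝ)
      = (1 / Real.pi) * ∑ j ∈ Finset.range n, c j * (Real.Gamma (((j:ℝ)+1)/α) / α) := by
    rw [show Finset.Icc 1 n = Finset.Ico 1 (n+1) from (Finset.Ico_add_one_right_eq_Icc 1 n).symm,
        Finset.sum_Ico_eq_sum_range]
    simp only [Nat.add_sub_cancel]
    have hterm : ∀ j ∈ Finset.range n,
        (-1:ℝ)^((1+j)+1) * Real.sin (((1+j:ℕ):ℝ) * Real.pi / 2) *
          Real.Gamma (1 + ((1+j:ℕ):ℝ)/α) * x^(1+j) / (((1+j).factorial : ℕ) : ℝ)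
        = x * (c j * (Real.Gamma (((j:ℝ)+1)/α)/α)) := by
      intro j _
      rw [coeff_eq]
      have hne : ((1+j:ℕ):ℝ)/α ≠ 0 := by positivity
      rw [add_comm (1:ℝ) (((1+j:ℕ):ℝ)/α), Real.Gamma_add_one hne]
      have hfac : (((1+j).factorial : ℕ) : ℝ) = ((1+j:ℕ):ℝ) * (j.factorial : ℝ) := by
        rw [show 1+j = j+1 from add_comm 1 j, Nat.factorial_succ]; push_cast; ring
      have hj1 : (((1+j:ℕ):ℝ))/α = ((j:ℝ)+1)/α := by push_cast; ring
      rw [hfac, hj1, hc]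
      have hxp : x ^ (1+j) = x * x^j := by rw [pow_add, pow_one]
      rw [hxp]
      have hjne : ((1+j:ℕ):ℝ) ≠ 0 := by positivity
      have hfne : ((j.factorial : ℕ):ℝ) ≠ 0 := by positivity
      push_cast
      field_simp
      ring
    rw [Finset.sum_congr rfl hterm, ← Finset.mul_sum]
    field_simp
  -- Step B : the integral of the Taylor polynomial
  have hTint : ∫ y in Ioi (0:ℝ),
        (∑ j ∈ Finset.range n, c j * (y ^ j * Real.exp (-(y ^ α))))
      = ∑ j ∈ Finset.range n, c j * (Real.Gamma (((j:ℝ)+1)/α) / α) := by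
    rw [MeasureTheory.integral_finset_sum]
    · exact Finset.sum_congr rfl fun j _ => by
        rw [MeasureTheory.integral_const_mul, integral_pow_exp α hα j]
    · exact fun j _ => (integrableOn_pow_exp α hα j).const_mul _
  -- Step C : integrability of the cosine integrand
  have hcont : Continuous (fun y : ℝ => Real.cos (x*y) * Real.exp (-(y ^ α))) :=
    (Real.continuous_cos.comp (continuous_const.mul continuous_id)).mul
      (Real.continuous_exp.comp (Real.continuous_rpow_const hα.le).neg)
  have hexp_int : IntegrableOn (fun y : ℝ => Real.exp (-(y ^ α))) (Ioi 0) := by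
    simpa using integrableOn_pow_exp α hα 0
  have hcos_int : IntegrableOn (fun y : ℝ => Real.cos (x*y) * Real.exp (-(y ^ α))) (Ioi 0) := by
    refine hexp_int.mono' hcont.aestronglyMeasurable.restrict
      (Filter.Eventually.of_forall (fun y => ?_))
    rw [Real.norm_eq_abs, abs_mul, abs_of_pos (Real.exp_pos _)]
    exact mul_le_of_le_one_left (Real.exp_pos _).le (Real.abs_cos_le_one _)
  have hT_int : Integrable (fun y : ℝ => ∑ j ∈ Finset.range n,
      c j * (y ^ j * Real.exp (-(y ^ α)))) (volume.restrict (Ioi 0)) :=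
    integrable_finset_sum _ (fun j _ => (integrableOn_pow_exp α hα j).const_mul _)
  -- Step D : final estimate
  have hdiff : stableDensity α x -
      (1 / (Real.pi * x)) * ∑ k ∈ Finset.Icc 1 n,
        (-1 : ℝ) ^ (k + 1) * Real.sin ((k : ℝ) * Real.pi / 2) *
          Real.Gamma (1 + (k : ℝ) / α) * x ^ k / (Nat.factorial k : ℝ)
      = (1 / Real.pi) * ∫ y in Ioi (0:ℝ),
          (Real.cos (x*y) * Real.exp (-(y ^ α)) -
            ∑ j ∈ Finset.range n, c j * (y ^ j * Real.exp (-(y ^ α)))) := by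
    rw [hsum, stableDensity, ← hTint, ← mul_sub, ← MeasureTheory.integral_sub hcos_int hT_int]
  rw [hdiff, abs_mul, abs_of_pos (by positivity : (0:ℝ) < 1 / Real.pi)]
  have hbound : |∫ y in Ioi (0:ℝ),
      (Real.cos (x*y) * Real.exp (-(y ^ α)) -
        ∑ j ∈ Finset.range n, c j * (y ^ j * Real.exp (-(y ^ α))))|
      ≤ ∫ y in Ioi (0:ℝ), (x^n / (n.factorial : ℝ)) * (y ^ n * Real.exp (-(y ^ α))) := by
    rw [← Real.norm_eq_abs]
    refine MeasureTheory.norm_integral_le_of_norm_le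
      ((integrableOn_pow_exp α hα n).const_mul _) ?_
    filter_upwards [self_mem_ae_restrict (measurableSet_Ioi : MeasurableSet (Ioi (0:ℝ)))]
      with y hy
    have hy0 : (0:ℝ) < y := hy
    have htb := cos_taylor_bound n 0 (x*y) (by positivity)
    simp only [Nat.cast_zero, zero_mul, add_zero] at htb
    have hsum2 : ∑ j ∈ Finset.range n, c j * (y ^ j * Real.exp (-(y ^ α)))
        = (∑ j ∈ Finset.range n,
            Real.cos ((j:ℝ) * (Real.pi/2)) * (x*y) ^ j / (j.factorial : ℝ)) *
          Real.exp (-(y ^ α)) := by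
      rw [Finset.sum_mul]
      exact Finset.sum_congr rfl fun j _ => by rw [hc, mul_pow]; ring
    rw [hsum2, Real.norm_eq_abs, ← sub_mul, abs_mul, abs_of_pos (Real.exp_pos _)]
    calc |Real.cos (x*y) - ∑ j ∈ Finset.range n,
            Real.cos ((j:ℝ) * (Real.pi/2)) * (x*y) ^ j / (j.factorial : ℝ)| *
          Real.exp (-(y ^ α))
        ≤ ((x*y)^n / (n.factorial : ℝ)) * Real.exp (-(y ^ α)) := by
          exact mul_le_mul_of_nonneg_right htb (Real.exp_pos _).le
      _ = (x^n / (n.factorial : ℝ)) * (y ^ n * Real.exp (-(y ^ α))) := by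
          rw [mul_pow]; ring
  have hval : ∫ y in Ioi (0:ℝ), (x^n / (n.factorial : ℝ)) * (y ^ n * Real.exp (-(y ^ α)))
      = (x^n / (n.factorial : ℝ)) * (Real.Gamma (((n:ℝ)+1)/α) / α) := by
    rw [MeasureTheory.integral_const_mul, integral_pow_exp α hα n]
  calc (1 / Real.pi) * |∫ y in Ioi (0:ℝ),
      (Real.cos (x*y) * Real.exp (-(y ^ α)) -
        ∑ j ∈ Finset.range n, c j * (y ^ j * Real.exp (-(y ^ α))))|
      ≤ (1 / Real.pi) * ((x^n / (n.factorial : ℝ)) * (Real.Gamma (((n:ℝ)+1)/α) / α)) := by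
        rw [← hval]
        exact mul_le_mul_of_nonneg_left hbound (by positivity)
    _ = x ^ n * Real.Gamma (((n : ℝ) + 1) / α) / (Real.pi * α * (Nat.factorial n : ℝ)) := by
        field_simp
end

section
/- For every α > 1 and every x ∈ ℝ, the series (1/(πα)) ∑_{j=0}^{∞} (−1)^{j} Γ((2j+1)/α) x^{2j}/(2j)! converges absolutely and its sum equals p_α(x). -/
open MeasureTheory Real Set

theorem convergent_series_expansion (α : ℝ) (hα : 1 < α) (x : ℝ) :
    Summable (fun j : ℕ =>
      |(1 / (Real.pi * α)) * (-1 : ℝ) ^ j * Real.Gamma ((2 * (j : ℝ) + 1) / α) *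
        x ^ (2 * j) / (Nat.factorial (2 * j) : ℝ)|) ∧
    (∑' j : ℕ, (1 / (Real.pi * α)) * (-1 : ℝ) ^ j * Real.Gamma ((2 * (j : ℝ) + 1) / α) *
        x ^ (2 * j) / (Nat.factorial (2 * j) : ℝ)) = stableDensity α x := by
  have hα0 : (0 : ℝ) < α := by linarith
  set μ := volume.restrict (Set.Ioi (0 : ℝ)) with hμ
  -- the summand after expanding cos
  set f : ℕ → ℝ → ℝ := fun j y =>
    ((-1 : ℝ) ^ j * x ^ (2 * j) / (Nat.factorial (2 * j) : ℝ)) *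
      (y ^ (2 * j) * Real.exp (-(y ^ α))) with hf
  -- integrability of each term
  have hint : ∀ j : ℕ, Integrable (f j) μ := by
    intro j
    refine Integrable.const_mul ?_ _
    have h0 : IntegrableOn (fun y : ℝ => y ^ ((2 * j : ℕ) : ℝ) * Real.exp (-(y ^ α)))
        (Set.Ioi 0) := by
      have := integrableOn_rpow_mul_exp_neg_rpow (p := α) (s := ((2 * j : ℕ) : ℝ))
        (neg_one_lt_zero.trans_le (Nat.cast_nonneg _)) hα0
      simpa using this
    have : IntegrableOn (fun y : ℝ => y ^ (2 * j) * Real.exp (-(y ^ α))) (Set.Ioi 0) := by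
      refine h0.congr_fun (fun y _ => ?_) measurableSet_Ioi
      dsimp only; rw [Real.rpow_natCast]
    exact this
  -- value of each integral
  have hval : ∀ j : ℕ, ∫ y in Set.Ioi (0 : ℝ), y ^ (2 * j) * Real.exp (-(y ^ α))
      = (1 / α) * Real.Gamma ((2 * (j : ℝ) + 1) / α) := by
    intro j
    have h1 : ∫ y in Set.Ioi (0 : ℝ), y ^ ((2 * j : ℕ) : ℝ) * Real.exp (-(y ^ α))
        = (1 / α) * Real.Gamma ((((2 * j : ℕ) : ℝ) + 1) / α) := by
      have := integral_rpow_mul_exp_neg_rpow (p := α) (q := ((2 * j : ℕ) : ℝ))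
        hα0 (neg_one_lt_zero.trans_le (Nat.cast_nonneg _))
      simpa using this
    have h2 : ∫ y in Set.Ioi (0 : ℝ), y ^ ((2 * j : ℕ) : ℝ) * Real.exp (-(y ^ α))
        = ∫ y in Set.Ioi (0 : ℝ), y ^ (2 * j) * Real.exp (-(y ^ α)) := by
      congr 1; funext y; rw [Real.rpow_natCast]
    rw [← h2, h1]
    norm_num
  -- the dominating function
  have hg : Integrable (fun y : ℝ => Real.exp (|x| * y) * Real.exp (-(y ^ α))) μ := by
    refine integrable_of_isBigO_exp_neg (a := 0) (b := 1) one_pos ?_ ?_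
    · refine Continuous.continuousOn ?_ |>.mul ?_
      · exact Real.continuous_exp.comp (continuous_const.mul continuous_id)
      · refine (ContinuousOn.rpow_const continuousOn_id ?_).neg.rexp
        intro y _; exact Or.inr hα0.le
    · refine Asymptotics.IsBigO.of_bound 1 ?_
      filter_upwards [Filter.eventually_ge_atTop (max 1 ((|x| + 1) ^ (1 / (α - 1))))]
        with y hy
      have hy1 : (1 : ℝ) ≤ y := le_trans (le_max_left _ _) hy
      have hy0 : (0 : ℝ) < y := lt_of_lt_of_le one_pos hy1
      have hpow : |x| + 1 ≤ y ^ (α - 1) := by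
        have h1 : ((|x| + 1) ^ (1 / (α - 1))) ^ (α - 1) ≤ y ^ (α - 1) := by
          refine Real.rpow_le_rpow (by positivity) (le_trans (le_max_right _ _) hy)
            (by linarith)
        rwa [← Real.rpow_mul (by positivity : (0:ℝ) ≤ |x| + 1),
          one_div_mul_cancel (sub_ne_zero_of_ne hα.ne'), Real.rpow_one] at h1
      have hyα : (|x| + 1) * y ≤ y ^ α := by
        have : y ^ α = y ^ (α - 1) * y := by
          rw [← Real.rpow_add_one hy0.ne' (α - 1), sub_add_cancel]
        rw [this]
        exact mul_le_mul_of_nonneg_right hpow hy0.le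
      have hle : |x| * y - y ^ α ≤ -y := by nlinarith
      have h2 : Real.exp (|x| * y) * Real.exp (-(y ^ α)) ≤ Real.exp (-y) := by
        rw [← Real.exp_add]
        exact Real.exp_le_exp.2 (by linarith)
      rw [Real.norm_eq_abs, Real.norm_eq_abs, abs_of_pos (by positivity),
        abs_of_pos (Real.exp_pos _), one_mul, neg_one_mul]
      exact h2
  -- pointwise absolute sums
  have habs : ∀ y : ℝ, 0 < y → HasSum (fun j => |f j y|)
      (Real.cosh (|x| * y) * Real.exp (-(y ^ α))) := by
    intro y hy
    have h := (Real.hasSum_cosh (|x| * y)).mul_right (Real.exp (-(y ^ α)))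
    convert h using 2 with j
    case e'_3 => rfl
    rw [hf]
    rw [abs_mul, abs_div, abs_mul, abs_pow, abs_pow, abs_neg, abs_one, one_pow, one_mul,
      abs_mul, abs_pow, Nat.abs_cast, abs_of_pos (Real.exp_pos _), abs_of_pos hy, mul_pow]
    ring
  -- finiteness of the sum of lintegrals
  have hfin : (∑' j : ℕ, ∫⁻ y, ‖f j y‖₊ ∂μ) ≠ ⊤ := by
    rw [← MeasureTheory.lintegral_tsum (fun j => (hint j).aestronglyMeasurable.aemeasurable.nnnorm.coe_nnreal_ennreal)]
    have hb : ∫⁻ y, (∑' j : ℕ, (‖f j y‖₊ : ENNReal)) ∂μ ≤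
        ∫⁻ y, ENNReal.ofReal (Real.exp (|x| * y) * Real.exp (-(y ^ α))) ∂μ := by
      rw [hμ]
      refine MeasureTheory.lintegral_mono_ae ?_
      filter_upwards [MeasureTheory.ae_restrict_mem measurableSet_Ioi] with y hy
      have hsum := habs y hy
      have h1 : (∑' j : ℕ, (‖f j y‖₊ : ENNReal)) =
          ENNReal.ofReal (∑' j : ℕ, |f j y|) := by
        rw [ENNReal.ofReal_tsum_of_nonneg (fun j => abs_nonneg _) hsum.summable]
        congr 1; funext j
        rw [← Real.norm_eq_abs, ofReal_norm, enorm_eq_nnnorm]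
      rw [h1, hsum.tsum_eq]
      refine ENNReal.ofReal_le_ofReal ?_
      refine mul_le_mul_of_nonneg_right ?_ (Real.exp_pos _).le
      -- cosh t ≤ exp t for t ≥ 0
      have ht : 0 ≤ |x| * y := mul_nonneg (abs_nonneg _) (le_of_lt hy)
      rw [Real.cosh_eq]
      have := Real.exp_le_exp.2 (neg_le_self ht)
      linarith [Real.exp_pos (|x| * y)]
    refine ne_of_lt (lt_of_le_of_lt hb ?_)
    exact hg.lintegral_lt_top
  -- each term of the series equals (1/π) * ∫ f j
  have hterm : ∀ j : ℕ, (1 / (Real.pi * α)) * (-1 : ℝ) ^ j *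
      Real.Gamma ((2 * (j : ℝ) + 1) / α) * x ^ (2 * j) / (Nat.factorial (2 * j) : ℝ)
      = (1 / Real.pi) * ∫ y, f j y ∂μ := by
    intro j
    rw [hf]
    simp only
    rw [MeasureTheory.integral_const_mul]
    rw [hμ, hval j]
    have hπ : Real.pi ≠ 0 := Real.pi_ne_zero
    field_simp
  -- summability
  have hsummable : Summable (fun j : ℕ =>
      |(1 / (Real.pi * α)) * (-1 : ℝ) ^ j * Real.Gamma ((2 * (j : ℝ) + 1) / α) *
        x ^ (2 * j) / (Nat.factorial (2 * j) : ℝ)|) := by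
    have h1 : Summable (fun j : ℕ => (∫⁻ y, ‖f j y‖₊ ∂μ).toReal) :=
      ENNReal.summable_toReal hfin
    refine Summable.of_nonneg_of_le (fun j => abs_nonneg _) (fun j => ?_)
      (h1.mul_left (1 / Real.pi))
    rw [hterm j, abs_mul, abs_of_pos (by positivity : (0:ℝ) < 1 / Real.pi)]
    refine mul_le_mul_of_nonneg_left ?_ (by positivity)
    calc |∫ y, f j y ∂μ| ≤ ∫ y, ‖f j y‖ ∂μ := by
          rw [← Real.norm_eq_abs]; exact norm_integral_le_integral_norm _
      _ = (∫⁻ y, ‖f j y‖₊ ∂μ).toReal := by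
          change ∫ y, ‖f j y‖ ∂μ = (∫⁻ y, ‖f j y‖ₑ ∂μ).toReal
          rw [← MeasureTheory.ofReal_integral_norm_eq_lintegral_enorm (hint j),
            ENNReal.toReal_ofReal (MeasureTheory.integral_nonneg (fun y => norm_nonneg _))]
  refine ⟨hsummable, ?_⟩
  -- now the sum
  have hswap : ∫ y, (∑' j : ℕ, f j y) ∂μ = ∑' j : ℕ, ∫ y, f j y ∂μ :=
    MeasureTheory.integral_tsum (fun j => (hint j).aestronglyMeasurable) hfin
  have hcos : ∀ y : ℝ, (∑' j : ℕ, f j y) = Real.cos (x * y) * Real.exp (-(y ^ α)) := by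
    intro y
    have h := (Real.hasSum_cos (x * y)).mul_right (Real.exp (-(y ^ α)))
    rw [← h.tsum_eq]
    congr 1; funext j
    rw [hf]; simp only [mul_pow]; ring
  calc (∑' j : ℕ, (1 / (Real.pi * α)) * (-1 : ℝ) ^ j *
        Real.Gamma ((2 * (j : ℝ) + 1) / α) * x ^ (2 * j) / (Nat.factorial (2 * j) : ℝ))
      = ∑' j : ℕ, (1 / Real.pi) * ∫ y, f j y ∂μ := by
        congr 1; funext j; exact hterm j
    _ = (1 / Real.pi) * ∑' j : ℕ, ∫ y, f j y ∂μ := tsum_mul_left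
    _ = (1 / Real.pi) * ∫ y, (∑' j : ℕ, f j y) ∂μ := by rw [hswap]
    _ = stableDensity α x := by
        rw [stableDensity, hμ]
        congr 1
        refine MeasureTheory.setIntegral_congr_fun measurableSet_Ioi (fun y _ => ?_)
        exact hcos y
end

section
/- For every compact set K ⊂ ℂ there exists a constant c = c(K) > 0 such that for all z ∈ K, all τ ∈ [1,2], and all natural numbers M, N, the partial double product satisfies |∏_{0 ≤ m ≤ M} ∏_{0 ≤ n ≤ N, (m,n) ≠ (0,0)} E₂(−z/(mτ + n))| ≤ c. In particular, the double infinite product appearing in the definition of the double gamma function G(z;τ) has all its partial products bounded uniformly over (z,τ) ∈ K × [1,2]. -/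
open Complex Set

/-- The Weierstrass canonical factor of degree 2: `E₂(w) = (1 - w) e^{w + w²/2}`. -/
noncomputable def E₂ (w : ℂ) : ℂ := (1 - w) * Complex.exp (w + w ^ 2 / 2)

lemma E₂_norm_le (w : ℂ) :
    ‖E₂ w‖ ≤ (1 + ‖w‖) * Real.exp (‖w‖ + ‖w‖ ^ 2 / 2) := by
  rw [E₂, norm_mul]
  have ha : ‖(1 : ℂ) - w‖ ≤ 1 + ‖w‖ := by
    calc ‖(1 : ℂ) - w‖ ≤ ‖(1 : ℂ)‖ + ‖w‖ := norm_sub_le _ _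
      _ = 1 + ‖w‖ := by simp
  apply mul_le_mul ha ?_ (norm_nonneg _) (by positivity)
  · rw [Complex.norm_exp]
    apply Real.exp_le_exp.2
    calc (w + w ^ 2 / 2).re ≤ ‖w + w ^ 2 / 2‖ := Complex.re_le_norm _
      _ ≤ ‖w‖ + ‖w ^ 2 / 2‖ := norm_add_le _ _
      _ = ‖w‖ + ‖w‖ ^ 2 / 2 := by
          rw [norm_div, norm_pow]; norm_num

lemma E₂_norm_le_of_small {w : ℂ} (hw : ‖w‖ ≤ 1 / 2) :
    ‖E₂ w‖ ≤ Real.exp (‖w‖ ^ 3) := by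
  have h1 : ‖w‖ < 1 := lt_of_le_of_lt hw (by norm_num)
  have hne : (1 : ℂ) - w ≠ 0 := by
    intro h
    have : w = 1 := by linear_combination -h
    rw [this] at h1; simp at h1
  have hE : E₂ w = Complex.exp (Complex.log (1 - w) + (w + w ^ 2 / 2)) := by
    rw [Complex.exp_add, Complex.exp_log hne, E₂]
  have hT : Complex.logTaylor 3 (-w) = -w - w ^ 2 / 2 := by
    simp [Complex.logTaylor, Finset.sum_range_succ]
    ring
  have h2 : Complex.log (1 - w) + (w + w ^ 2 / 2)
      = Complex.log (1 + (-w)) - Complex.logTaylor 3 (-w) := by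
    rw [hT, show (1 : ℂ) + (-w) = 1 - w from by ring]
    ring
  have h3 := Complex.norm_log_sub_logTaylor_le 2 (z := -w) (by simpa using h1)
  rw [hE, Complex.norm_exp]
  apply Real.exp_le_exp.2
  calc (Complex.log (1 - w) + (w + w ^ 2 / 2)).re
      ≤ ‖Complex.log (1 - w) + (w + w ^ 2 / 2)‖ := Complex.re_le_norm _
    _ = ‖Complex.log (1 + (-w)) - Complex.logTaylor (2 + 1) (-w)‖ := by rw [h2]
    _ ≤ ‖-w‖ ^ (2 + 1) * (1 - ‖-w‖)⁻¹ / (2 + 1) := h3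
    _ ≤ ‖w‖ ^ 3 := by
        rw [norm_neg]
        have h4 : (1 - ‖w‖)⁻¹ ≤ 2 := by
          rw [inv_le_comm₀ (by linarith) (by norm_num)]
          linarith
        have h5 : (0 : ℝ) ≤ ‖w‖ ^ 3 := by positivity
        calc ‖w‖ ^ (2 + 1) * (1 - ‖w‖)⁻¹ / (2 + 1)
            ≤ ‖w‖ ^ 3 * 2 / 3 := by
              gcongr
              · norm_num
            _ ≤ ‖w‖ ^ 3 := by linarith

noncomputable def vv (n : ℕ) : ℝ := ((((n : ℝ)) + 1) ^ ((3 : ℝ) / 2))⁻¹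

lemma vv_nonneg (n : ℕ) : 0 ≤ vv n := by unfold vv; positivity

lemma summable_vv : Summable vv := by
  have base : Summable (fun n : ℕ => ((n : ℝ) ^ ((3 : ℝ) / 2))⁻¹) :=
    Real.summable_nat_rpow_inv.mpr (by norm_num)
  have := (summable_nat_add_iff 1).mpr base
  refine this.congr fun n => ?_
  unfold vv
  push_cast
  ring_nf

noncomputable def uu (p : ℕ × ℕ) : ℝ := 8 * (vv p.1 * vv p.2)

lemma uu_nonneg (p : ℕ × ℕ) : 0 ≤ uu p := by
  have := vv_nonneg p.1
  have := vv_nonneg p.2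
  unfold uu; positivity

lemma summable_uu : Summable uu :=
  (summable_vv.mul_of_nonneg summable_vv vv_nonneg vv_nonneg).mul_left 8

lemma inv_cube_le (m n : ℕ) (h : ¬(m = 0 ∧ n = 0)) :
    ((((m : ℝ) + (n : ℝ)) ^ 3)⁻¹) ≤ uu (m, n) := by
  set x : ℝ := (m : ℝ) + (n : ℝ) with hx
  have hx1 : (1 : ℝ) ≤ x := by
    have h1 : 1 ≤ m + n := by omega
    have h2 : (1 : ℝ) ≤ ((m + n : ℕ) : ℝ) := Nat.one_le_cast.mpr h1
    push_cast at h2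
    linarith
  have hm : (m : ℝ) + 1 ≤ 2 * x := by
    have : (0 : ℝ) ≤ (n : ℝ) := Nat.cast_nonneg n
    nlinarith [Nat.cast_nonneg m (α := ℝ)]
  have hn : (n : ℝ) + 1 ≤ 2 * x := by
    nlinarith [Nat.cast_nonneg n (α := ℝ), Nat.cast_nonneg m (α := ℝ)]
  have hmpos : (0 : ℝ) ≤ (m : ℝ) + 1 := by positivity
  have hnpos : (0 : ℝ) ≤ (n : ℝ) + 1 := by positivity
  have key : (((m : ℝ) + 1) * ((n : ℝ) + 1)) ^ ((3 : ℝ) / 2) ≤ 8 * x ^ 3 := by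
    have h1 : (((m : ℝ) + 1) * ((n : ℝ) + 1)) ≤ (2 * x) ^ 2 := by nlinarith
    have h2 : (((m : ℝ) + 1) * ((n : ℝ) + 1)) ^ ((3 : ℝ) / 2)
        ≤ ((2 * x) ^ 2) ^ ((3 : ℝ) / 2) :=
      Real.rpow_le_rpow (by positivity) h1 (by norm_num)
    have h3 : ((2 * x) ^ 2) ^ ((3 : ℝ) / 2) = (2 * x) ^ 3 := by
      rw [← Real.rpow_natCast (2 * x) 2, ← Real.rpow_mul (by linarith),
        ← Real.rpow_natCast (2 * x) 3]
      norm_num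
    rw [h3] at h2
    nlinarith
  have hrw : uu (m, n) = 8 * ((((m : ℝ) + 1) * ((n : ℝ) + 1)) ^ ((3 : ℝ) / 2))⁻¹ := by
    unfold uu vv
    rw [Real.mul_rpow hmpos hnpos, mul_inv]
  rw [hrw]
  rw [show (8 : ℝ) * ((((m : ℝ) + 1) * ((n : ℝ) + 1)) ^ ((3 : ℝ) / 2))⁻¹
      = (((((m : ℝ) + 1) * ((n : ℝ) + 1)) ^ ((3 : ℝ) / 2)) / 8)⁻¹ from by
    rw [inv_div]; ring]
  apply inv_anti₀
  · positivity
  · linarith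

theorem double_product_uniformly_bounded (K : Set ℂ) (hK : IsCompact K) :
    ∃ c : ℝ, 0 < c ∧ ∀ z ∈ K, ∀ τ ∈ Set.Icc (1 : ℝ) 2, ∀ M N : ℕ,
      ‖(∏ m ∈ Finset.range (M + 1), ∏ n ∈ Finset.range (N + 1),
          if m = 0 ∧ n = 0 then 1
          else E₂ (-z / (((m : ℝ) * τ + (n : ℝ) : ℝ) : ℂ)))‖ ≤ c := by
  obtain ⟨R₀, hR₀⟩ := hK.isBounded.exists_norm_le
  set R : ℝ := max R₀ 0 with hRdef
  have hR : 0 ≤ R := le_max_right _ _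
  have hzR : ∀ z ∈ K, ‖z‖ ≤ R := fun z hz => le_trans (hR₀ z hz) (le_max_left _ _)
  set K₀ : ℕ := ⌈2 * R⌉₊ + 1 with hK₀def
  set B : ℝ := (1 + R) * Real.exp (R + R ^ 2 / 2) with hBdef
  set B' : ℝ := max B 1 with hB'def
  have hB'1 : (1 : ℝ) ≤ B' := le_max_right _ _
  have hBB' : B ≤ B' := le_max_left _ _
  have hB'0 : (0 : ℝ) ≤ B' := le_trans zero_le_one hB'1
  set T : ℝ := ∑' p : ℕ × ℕ, uu p with hTdef
  refine ⟨B' ^ (K₀ * K₀) * Real.exp (R ^ 3 * T), by positivity, ?_⟩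
  intro z hz τ hτ M N
  obtain ⟨hτ1, hτ2⟩ := hτ
  set S : Finset (ℕ × ℕ) := Finset.range K₀ ×ˢ Finset.range K₀ with hSdef
  have key : ∀ m n : ℕ,
      ‖(if m = 0 ∧ n = 0 then 1
          else E₂ (-z / (((m : ℝ) * τ + (n : ℝ) : ℝ) : ℂ)))‖
        ≤ (if (m, n) ∈ S then B' else 1) * Real.exp (R ^ 3 * uu (m, n)) := by
    intro m n
    have hre : (1 : ℝ) ≤ Real.exp (R ^ 3 * uu (m, n)) :=
      Real.one_le_exp (mul_nonneg (by positivity) (uu_nonneg _))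
    by_cases h0 : m = 0 ∧ n = 0
    · rw [if_pos h0, norm_one]
      have hS : (m, n) ∈ S := by
        obtain ⟨rfl, rfl⟩ := h0
        simp [hSdef, hK₀def]
      rw [if_pos hS]
      nlinarith
    · rw [if_neg h0]
      set d : ℝ := (m : ℝ) * τ + (n : ℝ) with hd
      have hmn1 : (1 : ℝ) ≤ (m : ℝ) + (n : ℝ) := by
        have h1 : 1 ≤ m + n := by omega
        have h2 : (1 : ℝ) ≤ ((m + n : ℕ) : ℝ) := Nat.one_le_cast.mpr h1
        push_cast at h2; linarith
      have hdm : (m : ℝ) + (n : ℝ) ≤ d := by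
        have : (0 : ℝ) ≤ (m : ℝ) := Nat.cast_nonneg m
        nlinarith
      have hd1 : (1 : ℝ) ≤ d := le_trans hmn1 hdm
      have hd0 : (0 : ℝ) < d := lt_of_lt_of_le one_pos hd1
      set w : ℂ := -z / ((d : ℝ) : ℂ) with hwdef
      have hwnorm : ‖w‖ = ‖z‖ / d := by
        rw [hwdef, norm_div, norm_neg, Complex.norm_real, Real.norm_of_nonneg hd0.le]
      have hwR : ‖w‖ ≤ R := by
        rw [hwnorm]
        calc ‖z‖ / d ≤ ‖z‖ / 1 := by gcongr
          _ = ‖z‖ := div_one _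
          _ ≤ R := hzR z hz
      by_cases hsmall : ‖w‖ ≤ 1 / 2
      · have hcube : ‖w‖ ^ 3 ≤ R ^ 3 * uu (m, n) := by
          have hwle : ‖w‖ ≤ R / ((m : ℝ) + (n : ℝ)) := by
            rw [hwnorm]
            exact div_le_div₀ hR (hzR z hz) (by linarith) hdm
          calc ‖w‖ ^ 3 ≤ (R / ((m : ℝ) + (n : ℝ))) ^ 3 :=
                pow_le_pow_left₀ (norm_nonneg w) hwle 3
            _ = R ^ 3 * ((((m : ℝ) + (n : ℝ)) ^ 3)⁻¹) := by
                rw [div_pow]; ring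
            _ ≤ R ^ 3 * uu (m, n) :=
                mul_le_mul_of_nonneg_left (inv_cube_le m n h0) (by positivity)
        calc ‖E₂ w‖ ≤ Real.exp (‖w‖ ^ 3) := by
              exact E₂_norm_le_of_small hsmall
          _ ≤ Real.exp (R ^ 3 * uu (m, n)) := Real.exp_le_exp.2 hcube
          _ ≤ (if (m, n) ∈ S then B' else 1) * Real.exp (R ^ 3 * uu (m, n)) := by
              apply le_mul_of_one_le_left (Real.exp_nonneg _)
              split_ifs
              · exact hB'1
              · exact le_refl 1
      · push_neg at hsmall
        have hzd : d < 2 * ‖z‖ := by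
          rw [hwnorm] at hsmall
          have := (lt_div_iff₀ hd0).mp hsmall
          linarith
        have h2R : d < 2 * R := lt_of_lt_of_le hzd (by linarith [hzR z hz])
        have hceil := Nat.le_ceil (2 * R)
        have hmK : m < K₀ := by
          have h1 : (m : ℝ) < ((K₀ : ℕ) : ℝ) := by
            rw [hK₀def]
            push_cast
            have h2 : (0 : ℝ) ≤ (n : ℝ) := Nat.cast_nonneg n
            linarith
          exact_mod_cast h1
        have hnK : n < K₀ := by
          have h1 : (n : ℝ) < ((K₀ : ℕ) : ℝ) := by
            rw [hK₀def]
            push_cast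
            have h2 : (0 : ℝ) ≤ (m : ℝ) := Nat.cast_nonneg m
            linarith
          exact_mod_cast h1
        have hS : (m, n) ∈ S := by
          simp only [hSdef, Finset.mem_product, Finset.mem_range]
          exact ⟨hmK, hnK⟩
        rw [if_pos hS]
        calc ‖E₂ w‖
            ≤ (1 + ‖w‖) * Real.exp (‖w‖ + ‖w‖ ^ 2 / 2) := by
              exact E₂_norm_le w
          _ ≤ (1 + R) * Real.exp (R + R ^ 2 / 2) := by
              gcongr <;> first | exact hwR | positivity
          _ ≤ B' := hBB'
          _ ≤ B' * Real.exp (R ^ 3 * uu (m, n)) :=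
              le_mul_of_one_le_right hB'0 hre
  calc ‖(∏ m ∈ Finset.range (M + 1), ∏ n ∈ Finset.range (N + 1),
        if m = 0 ∧ n = 0 then 1 else E₂ (-z / (((m : ℝ) * τ + (n : ℝ) : ℝ) : ℂ)))‖
      = ∏ m ∈ Finset.range (M + 1), ∏ n ∈ Finset.range (N + 1),
          ‖(if m = 0 ∧ n = 0 then 1
            else E₂ (-z / (((m : ℝ) * τ + (n : ℝ) : ℝ) : ℂ)))‖ := by
        rw [norm_prod]
        exact Finset.prod_congr rfl fun m _ => norm_prod _ _
    _ ≤ ∏ m ∈ Finset.range (M + 1), ∏ n ∈ Finset.range (N + 1),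
          ((if (m, n) ∈ S then B' else 1) * Real.exp (R ^ 3 * uu (m, n))) := by
        apply Finset.prod_le_prod
        · intro m _
          exact Finset.prod_nonneg fun n _ => norm_nonneg _
        · intro m _
          apply Finset.prod_le_prod
          · intro n _
            exact norm_nonneg _
          · intro n _
            exact key m n
    _ = ∏ p ∈ Finset.range (M + 1) ×ˢ Finset.range (N + 1),
          ((if p ∈ S then B' else 1) * Real.exp (R ^ 3 * uu p)) :=
        (Finset.prod_product' _ _ _).symm
    _ = (∏ p ∈ Finset.range (M + 1) ×ˢ Finset.range (N + 1),
          (if p ∈ S then B' else 1)) *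
        ∏ p ∈ Finset.range (M + 1) ×ˢ Finset.range (N + 1),
          Real.exp (R ^ 3 * uu p) := Finset.prod_mul_distrib
    _ ≤ B' ^ (K₀ * K₀) * Real.exp (R ^ 3 * T) := by
        apply mul_le_mul ?_ ?_ ?_ (by positivity)
        · rw [Finset.prod_ite_mem, Finset.prod_const]
          apply pow_le_pow_right₀ hB'1
          calc ((Finset.range (M + 1) ×ˢ Finset.range (N + 1)) ∩ S).card
              ≤ S.card := Finset.card_le_card Finset.inter_subset_right
            _ = K₀ * K₀ := by simp [hSdef]
        · rw [← Real.exp_sum]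
          apply Real.exp_le_exp.2
          rw [← Finset.mul_sum]
          apply mul_le_mul_of_nonneg_left ?_ (by positivity)
          exact Summable.sum_le_tsum _ (fun p _ => uu_nonneg p) summable_uu
        · exact Finset.prod_nonneg fun p _ => Real.exp_nonneg _
end

section
/- For every real α > 1, 1/Γ(1 − 1/α) ≤ e(α − 1)/α. -/
open MeasureTheory Set

lemma gamma_ge_exp_neg_one {y : ℝ} (hy : 1 ≤ y) : Real.exp (-1) ≤ Real.Gamma y := by
  have hy0 : 0 < y := lt_of_lt_of_le one_pos hy
  rw [Real.Gamma_eq_integral hy0]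
  have hint : IntegrableOn (fun x => Real.exp (-x) * x ^ (y - 1)) (Ioi 0) :=
    Real.GammaIntegral_convergent hy0
  have hint1 : IntegrableOn (fun x => Real.exp (-x) * x ^ (y - 1)) (Ioi 1) :=
    hint.mono_set (Ioi_subset_Ioi zero_le_one)
  have h1 : Real.exp (-1) = ∫ x in Ioi (1:ℝ), Real.exp (-x) := (integral_exp_neg_Ioi 1).symm
  rw [h1]
  have step1 : (∫ x in Ioi (1:ℝ), Real.exp (-x)) ≤
      ∫ x in Ioi (1:ℝ), Real.exp (-x) * x ^ (y - 1) := by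
    apply setIntegral_mono_on (by simpa using exp_neg_integrableOn_Ioi 1 one_pos) hint1
      measurableSet_Ioi
    intro x hx
    have hx1 : (1:ℝ) ≤ x := le_of_lt hx
    nth_rewrite 1 [show Real.exp (-x) = Real.exp (-x) * 1 by ring]
    apply mul_le_mul_of_nonneg_left _ (Real.exp_nonneg _)
    exact Real.one_le_rpow hx1 (by linarith)
  refine step1.trans ?_
  apply setIntegral_mono_set hint
  · filter_upwards [ae_restrict_mem measurableSet_Ioi] with x hx
    exact mul_nonneg (Real.exp_nonneg _) (Real.rpow_nonneg (le_of_lt hx) _)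
  · exact HasSubset.Subset.eventuallyLE (Ioi_subset_Ioi zero_le_one)

theorem inv_gamma_upper_bound (α : ℝ) (hα : 1 < α) :
    1 / Real.Gamma (1 - 1 / α) ≤ Real.exp 1 * (α - 1) / α := by
  have hα0 : 0 < α := lt_trans one_pos hα
  set x : ℝ := 1 - 1 / α with hx
  have hx0 : 0 < x := by
    have : 1 / α < 1 := by
      rw [div_lt_one hα0]; exact hα
    have h2 : 0 < 1 / α := by positivity
    simp only [hx]; linarith
  have hΓadd : Real.Gamma (x + 1) = x * Real.Gamma x := Real.Gamma_add_one (ne_of_gt hx0)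
  have hΓpos : 0 < Real.Gamma x := Real.Gamma_pos_of_pos hx0
  have hlb : Real.exp (-1) ≤ Real.Gamma (x + 1) := gamma_ge_exp_neg_one (by linarith)
  have key : 1 / Real.Gamma x ≤ Real.exp 1 * x := by
    rw [div_le_iff₀ hΓpos]
    have h1 : Real.exp 1 * x * Real.Gamma x = Real.exp 1 * Real.Gamma (x + 1) := by
      rw [hΓadd]; ring
    rw [h1]
    have : Real.exp 1 * Real.exp (-1) ≤ Real.exp 1 * Real.Gamma (x + 1) :=
      mul_le_mul_of_nonneg_left hlb (Real.exp_nonneg 1)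
    rwa [← Real.exp_add, add_neg_cancel, Real.exp_zero] at this
  have heq : Real.exp 1 * (α - 1) / α = Real.exp 1 * x := by
    field_simp [hx]
    rw [hx, mul_sub, mul_one, mul_one_div_cancel hα0.ne']
  rw [heq]; exact key
end
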